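/- Let R be a finite TRS and t a basic term. Then: (i) if t is terminating with respect to →_R, then for every →_R-derivation of length m starting from t there is a →_{U(WDP(R)) ∪ WDP(R)}-derivation of length m starting from t♯; (ii) if t is terminating with respect to the innermost relation i→_R, then for every i→_R-derivation of length m starting from t there is a →_{U(WIDP(R)) ∪ WIDP(R)}-derivation of length m starting from t♯; (iii) if moreover every compound symbol occurring in WIDP(R) is nullary, then for every i→_R-derivation of length m starting from t there is a →_{U(DP(R)) ∪ DP(R)}-derivation of length at least m − 1 starting from t♯. -/

import Mathlib

open scoped Classical

/-- First-order terms over a signature `F` (with arity function `ar`) and variables `V`. -/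
inductive Tm (F : Type) (ar : F → ℕ) (V : Type) : Type where
  | var : V → Tm F ar V
  | fn : (f : F) → (Fin (ar f) → Tm F ar V) → Tm F ar V

namespace Tm

variable {F : Type} {ar : F → ℕ} {V : Type}

/-- The size of a term: the number of occurrences of variables and function symbols. -/
def size : Tm F ar V → ℕ
  | var _ => 1
  | fn _ ts => 1 + ∑ i, (ts i).size

/-- Number of occurrences of the variable `x` in a term. -/
def count [DecidableEq V] (x : V) : Tm F ar V → ℕ
  | var y => if y = x then 1 else 0
  | fn _ ts => ∑ i, (ts i).count x

/-- Application of a substitution to a term. -/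
def subst (σ : V → Tm F ar V) : Tm F ar V → Tm F ar V
  | var x => σ x
  | fn f ts => fn f fun i => (ts i).subst σ

/-- The set of function symbols occurring in a term. -/
def funcs : Tm F ar V → Set F
  | var _ => ∅
  | fn f ts => insert f (⋃ i, (ts i).funcs)

end Tm

/-- `R` is a term rewrite system: left-hand sides are not variables and every variable
of a right-hand side occurs in the corresponding left-hand side. -/
def IsTRS {F : Type} {ar : F → ℕ} (R : Set (Tm F ar ℕ × Tm F ar ℕ)) : Prop :=
  ∀ p ∈ R, (∀ x : ℕ, p.1 ≠ Tm.var x) ∧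
    ∀ x : ℕ, 0 < Tm.count x p.2 → 0 < Tm.count x p.1

/-- The rewrite relation of `R`: the closure of the rules under contexts and
substitutions. -/
inductive Rew {F : Type} {ar : F → ℕ} (R : Set (Tm F ar ℕ × Tm F ar ℕ)) :
    Tm F ar ℕ → Tm F ar ℕ → Prop
  | rule {l r} (σ : ℕ → Tm F ar ℕ) : (l, r) ∈ R → Rew R (l.subst σ) (r.subst σ)
  | congr {f} {ts : Fin (ar f) → Tm F ar ℕ} (i) {t'} :
      Rew R (ts i) t' → Rew R (.fn f ts) (.fn f (Function.update ts i t'))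

/-- A `ρ`-derivation of length `n`: `d 0 → d 1 → ⋯ → d n`. -/
def ChainOf {A : Type} (ρ : A → A → Prop) (n : ℕ) (d : ℕ → A) : Prop :=
  ∀ i < n, ρ (d i) (d (i + 1))

/-- The defined symbols of `R`: the root symbols of left-hand sides of rules of `R`. -/
def DefinedSym {F : Type} {ar : F → ℕ} (R : Set (Tm F ar ℕ × Tm F ar ℕ)) : Set F :=
  {f | ∃ p ∈ R, ∃ ts, p.1 = Tm.fn f ts}

/-- The immediate-subterm relation: `u` is a child of `t`. -/
def childR {F : Type} {ar : F → ℕ} (u t : Tm F ar ℕ) : Prop :=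
  ∃ f ts i, t = Tm.fn f ts ∧ u = ts i

/-- `t` is a normal form of `R`. -/
def IsNF {F : Type} {ar : F → ℕ} (R : Set (Tm F ar ℕ × Tm F ar ℕ))
    (t : Tm F ar ℕ) : Prop :=
  ¬ ∃ u, Rew R t u

/-- The innermost rewrite relation of `R`: a rule may only be applied if all proper
subterms of the redex are normal forms of `R`. -/
inductive IRew {F : Type} {ar : F → ℕ} (R : Set (Tm F ar ℕ × Tm F ar ℕ)) :
    Tm F ar ℕ → Tm F ar ℕ → Prop
  | rule {l r} (σ : ℕ → Tm F ar ℕ) : (l, r) ∈ R →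
      (∀ u, Relation.TransGen childR u (l.subst σ) → IsNF R u) →
      IRew R (l.subst σ) (r.subst σ)
  | congr {f} {ts : Fin (ar f) → Tm F ar ℕ} (i) {t'} :
      IRew R (ts i) t' → IRew R (.fn f ts) (.fn f (Function.update ts i t'))

/-- The extended signature: for every `f ∈ F` a base copy and a marked (dependency
pair) symbol `f♯`, and for every rule `l → r` and every `n` a fresh `n`-ary compound
symbol `c_{l→r}`. -/
inductive MS (F : Type) (ar : F → ℕ) : Type where
  | base : F → MS F ar
  | mark : F → MS F ar
  | comp : (Tm F ar ℕ × Tm F ar ℕ) → ℕ → MS F ar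

/-- Arities on the extended signature. -/
def mar {F : Type} (ar : F → ℕ) : MS F ar → ℕ
  | .base f => ar f
  | .mark f => ar f
  | .comp _ n => n

variable {F : Type} {ar : F → ℕ}

/-- The inclusion of terms over `F` into terms over the extended signature. -/
def liftT : Tm F ar ℕ → Tm (MS F ar) (mar ar) ℕ
  | .var x => .var x
  | .fn f ts => .fn (MS.base f) fun i => liftT (ts i)

/-- Marking: `x♯ = x` and `(f(t₁,…,tₙ))♯ = f♯(t₁,…,tₙ)`. -/
def markT : Tm F ar ℕ → Tm (MS F ar) (mar ar) ℕ
  | .var x => .var x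
  | .fn f ts => .fn (MS.mark f) fun i => liftT (ts i)

/-- The list of maximal `X`-rooted subterms of a term, in left-to-right order: the
unique `[u₁,…,uₙ]` such that `t = C⟨u₁,…,uₙ⟩_X`. -/
noncomputable def maxSubts (X : Tm F ar ℕ → Prop) : Tm F ar ℕ → List (Tm F ar ℕ)
  | .var x => if X (.var x) then [.var x] else []
  | .fn f ts =>
      if X (.fn f ts) then [.fn f ts]
      else (List.ofFn fun i => maxSubts X (ts i)).flatten

/-- `COM_{l→r}(t₁,…,tₙ)`: `t₁` if `n = 1`, and otherwise the fresh compound symbol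
`c_{l→r}` applied to `t₁,…,tₙ`. -/
noncomputable def com (p : Tm F ar ℕ × Tm F ar ℕ)
    (us : List (Tm (MS F ar) (mar ar) ℕ)) : Tm (MS F ar) (mar ar) ℕ :=
  if h : us.length = 1 then us.get ⟨0, by omega⟩
  else .fn (MS.comp p us.length) fun i => us.get i

/-- `u` has its root in `D ∪ V` (for `D` the defined symbols of `R`). -/
def RootDV (R : Set (Tm F ar ℕ × Tm F ar ℕ)) (u : Tm F ar ℕ) : Prop :=
  (∃ x, u = Tm.var x) ∨ ∃ f ts, u = Tm.fn f ts ∧ f ∈ DefinedSym R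

/-- `u` has its root in `D` (for `D` the defined symbols of `R`). -/
def RootD (R : Set (Tm F ar ℕ × Tm F ar ℕ)) (u : Tm F ar ℕ) : Prop :=
  ∃ f ts, u = Tm.fn f ts ∧ f ∈ DefinedSym R

/-- The weak dependency pairs of `R`:  for every rule `l → r ∈ R`, if
`r = C⟨u₁,…,uₙ⟩_{D∪V}` then `l♯ → COM_{l→r}(u₁♯,…,uₙ♯)` is a weak dependency pair. -/
noncomputable def WDPs (R : Set (Tm F ar ℕ × Tm F ar ℕ)) :
    Set (Tm (MS F ar) (mar ar) ℕ × Tm (MS F ar) (mar ar) ℕ) :=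
  {q | ∃ p ∈ R, q = (markT p.1, com p ((maxSubts (RootDV R) p.2).map markT))}

/-- The weak innermost dependency pairs of `R`: as for `WDPs`, but with respect to the
decomposition `r = C⟨u₁,…,uₙ⟩_D`. -/
noncomputable def WIDPs (R : Set (Tm F ar ℕ × Tm F ar ℕ)) :
    Set (Tm (MS F ar) (mar ar) ℕ × Tm (MS F ar) (mar ar) ℕ) :=
  {q | ∃ p ∈ R, q = (markT p.1, com p ((maxSubts (RootD R) p.2).map markT))}

/-- The (standard) dependency pairs of `R`:
`DP(R) = {l♯ → u♯ : l → r ∈ R, u a subterm of r with defined root}`. -/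
def DPs (R : Set (Tm F ar ℕ × Tm F ar ℕ)) :
    Set (Tm (MS F ar) (mar ar) ℕ × Tm (MS F ar) (mar ar) ℕ) :=
  {q | ∃ p ∈ R, ∃ u, Relation.ReflTransGen childR u p.2 ∧ RootD R u ∧
    q = (markT p.1, markT u)}

/-- `f ▷_d g`: there is a rule `l → r ∈ R` with `root(l) = f` and `g` a defined symbol
occurring in `r`. -/
def depR (R : Set (Tm F ar ℕ × Tm F ar ℕ)) (f g : F) : Prop :=
  ∃ p ∈ R, (∃ ts, p.1 = Tm.fn f ts) ∧ g ∈ DefinedSym R ∧ g ∈ Tm.funcs p.2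

/-- The usable rules of a term `t` over the extended signature: the rules of `R` whose
left-hand side root is `▷_d^*`-reachable from some symbol occurring in `t`. -/
def usableOf (R : Set (Tm F ar ℕ × Tm F ar ℕ)) (t : Tm (MS F ar) (mar ar) ℕ) :
    Set (Tm F ar ℕ × Tm F ar ℕ) :=
  {p | p ∈ R ∧ ∃ g f, MS.base g ∈ Tm.funcs t ∧ Relation.ReflTransGen (depR R) g f ∧
    ∃ ts, p.1 = Tm.fn f ts}

/-- The usable rules of a set `P` of dependency pairs: `U(P) = ⋃_{l→r ∈ P} U(r)`. -/
def usableRules (R : Set (Tm F ar ℕ × Tm F ar ℕ))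
    (P : Set (Tm (MS F ar) (mar ar) ℕ × Tm (MS F ar) (mar ar) ℕ)) :
    Set (Tm F ar ℕ × Tm F ar ℕ) :=
  {p | ∃ q ∈ P, p ∈ usableOf R q.2}

/-- The combined rewrite system `U(P) ∪ P` over the extended signature. -/
def combined (R : Set (Tm F ar ℕ × Tm F ar ℕ))
    (P : Set (Tm (MS F ar) (mar ar) ℕ × Tm (MS F ar) (mar ar) ℕ)) :
    Set (Tm (MS F ar) (mar ar) ℕ × Tm (MS F ar) (mar ar) ℕ) :=
  ((fun p : Tm F ar ℕ × Tm F ar ℕ => (liftT p.1, liftT p.2)) '' usableRules R P) ∪ P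

/-- `t` is a basic term: `t = f(t₁,…,tₙ)` with `f` defined and no `tᵢ` containing a
defined symbol. -/
def BasicTm (R : Set (Tm F ar ℕ × Tm F ar ℕ)) (t : Tm F ar ℕ) : Prop :=
  ∃ f ts, t = Tm.fn f ts ∧ f ∈ DefinedSym R ∧
    ∀ i, ∀ g ∈ Tm.funcs (ts i), g ∉ DefinedSym R

section WDPDevel

open Relation List

variable {F : Type} {ar : F → ℕ}

/-! ### Generic chain/derivation-bound machinery -/

/-- There exists a `ρ`-derivation of length `n` from `a`. -/
def Bnd {A : Type} (ρ : A → A → Prop) (n : ℕ) (a : A) : Prop :=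
  ∃ d : ℕ → A, d 0 = a ∧ ChainOf ρ n d

lemma bndZero {A : Type} (ρ : A → A → Prop) (a : A) : Bnd ρ 0 a :=
  ⟨fun _ => a, rfl, fun i h => absurd h (Nat.not_lt_zero i)⟩

lemma bndMono {A : Type} {ρ : A → A → Prop} {n k : ℕ} {a : A}
    (h : Bnd ρ n a) (hk : k ≤ n) : Bnd ρ k a := by
  obtain ⟨d, h0, hc⟩ := h
  exact ⟨d, h0, fun i hi => hc i (lt_of_lt_of_le hi hk)⟩

lemma bndCons {A : Type} {ρ : A → A → Prop} {n : ℕ} {a b : A}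
    (hab : ρ a b) (h : Bnd ρ n b) : Bnd ρ (n + 1) a := by
  obtain ⟨d, h0, hc⟩ := h
  refine ⟨fun i => match i with | 0 => a | (i+1) => d i, rfl, ?_⟩
  intro i hi
  match i with
  | 0 => show ρ a (d 0); rw [h0]; exact hab
  | (i+1) => exact hc i (by omega)

lemma chainShift {A : Type} {ρ : A → A → Prop} {m : ℕ} {d : ℕ → A}
    (h : ChainOf ρ (m + 1) d) : ChainOf ρ m (fun n => d (n + 1)) :=
  fun i hi => h (i + 1) (by omega)

lemma bndAppend {A : Type} {ρ : A → A → Prop} {k k2 : ℕ} {a : A} (d : ℕ → A)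
    (h0 : d 0 = a) (hc : ChainOf ρ k d) (h2 : Bnd ρ k2 (d k)) : Bnd ρ (k + k2) a := by
  obtain ⟨e, e0, ec⟩ := h2
  refine ⟨fun n => if n < k then d n else e (n - k), ?_, ?_⟩
  · rcases Nat.eq_zero_or_pos k with rfl | hk
    · simpa using e0.trans h0
    · simp [hk, h0]
  · intro i hi
    dsimp only
    by_cases h1 : i + 1 < k
    · have hik : i < k := by omega
      rw [if_pos hik, if_pos h1]
      exact hc i (by omega)
    · by_cases h2' : i < k
      · have hik : i + 1 = k := by omega
        rw [if_pos h2', if_neg h1, hik, Nat.sub_self, e0, ← hik]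
        exact hc i (by omega)
      · rw [if_neg h2', if_neg h1]
        have h3 : i + 1 - k = (i - k) + 1 := by omega
        rw [h3]
        exact ec (i - k) (by omega)

section Recomb

variable {G : Type} {arG : G → ℕ} {S : Set (Tm G arG ℕ × Tm G arG ℕ)}

lemma chainArg {f : G} (as : Fin (arG f) → Tm G arG ℕ) (i : Fin (arG f))
    {k : ℕ} {d : ℕ → Tm G arG ℕ} (hc : ChainOf (Rew S) k d) :
    ChainOf (Rew S) k (fun n => Tm.fn f (Function.update as i (d n))) := by
  intro n hn
  have h := hc n hn
  have h2 := Rew.congr (R := S) (f := f) (ts := Function.update as i (d n)) i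
      (t' := d (n + 1)) (by rw [Function.update_self]; exact h)
  simpa [Function.update_idem] using h2

lemma bndFnList {f : G} : ∀ (L : List (Fin (arG f))), L.Nodup →
    ∀ (as : Fin (arG f) → Tm G arG ℕ) (kf : Fin (arG f) → ℕ),
    (∀ i ∈ L, Bnd (Rew S) (kf i) (as i)) →
    Bnd (Rew S) ((L.map kf).sum) (Tm.fn f as)
  | [], _, as, kf, _ => by simpa using bndZero _ _
  | (i :: L), hnd, as, kf, h => by
    obtain ⟨d, d0, dc⟩ := h i List.mem_cons_self
    have hchain := chainArg as i dc
    have h0 : (fun n => Tm.fn f (Function.update as i (d n))) 0 = Tm.fn f as := by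
      show Tm.fn f (Function.update as i (d 0)) = Tm.fn f as
      rw [d0, Function.update_eq_self]
    have hrest : Bnd (Rew S) ((L.map kf).sum)
        (Tm.fn f (Function.update as i (d (kf i)))) := by
      apply bndFnList L (List.nodup_cons.mp hnd).2 (Function.update as i (d (kf i))) kf
      intro j hj
      have hji : j ≠ i := fun e => (List.nodup_cons.mp hnd).1 (e ▸ hj)
      rw [Function.update_of_ne hji]
      exact h j (List.mem_cons_of_mem _ hj)
    have hfin := bndAppend _ h0 hchain hrest
    simpa using hfin

lemma bndFn {f : G} (as : Fin (arG f) → Tm G arG ℕ) (kf : Fin (arG f) → ℕ)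
    (h : ∀ i, Bnd (Rew S) (kf i) (as i)) : Bnd (Rew S) (∑ i, kf i) (Tm.fn f as) := by
  have h2 := bndFnList (List.finRange (arG f)) (List.nodup_finRange _) as kf (fun i _ => h i)
  rwa [← Fin.sum_univ_def] at h2

end Recomb

/-! ### Term lemmas -/

lemma liftT_subst (σ : ℕ → Tm F ar ℕ) (u : Tm F ar ℕ) :
    liftT (u.subst σ) = (liftT u).subst (fun x => liftT (σ x)) := by
  induction u with
  | var x => rfl
  | fn f ts ih =>
    show Tm.fn (MS.base f) _ = Tm.fn (MS.base f) _
    exact congrArg _ (funext fun i => ih i)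

lemma markT_subst (σ : ℕ → Tm F ar ℕ) (f : F) (ws : Fin (ar f) → Tm F ar ℕ) :
    markT ((Tm.fn f ws).subst σ) = (markT (Tm.fn f ws)).subst (fun x => liftT (σ x)) := by
  show Tm.fn (MS.mark f) _ = Tm.fn (MS.mark f) _
  exact congrArg _ (funext fun i => liftT_subst σ (ws i))

lemma compUpdate {n : ℕ} {α β : Type} (g : α → β) (ts : Fin n → α) (i : Fin n) (t' : α) :
    (fun j => g (Function.update ts i t' j)) = Function.update (fun j => g (ts j)) i (g t') := by
  funext j
  by_cases h : j = i
  · subst h; simp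
  · simp [Function.update_of_ne h]

lemma funcs_liftT {g : F} : ∀ {w : Tm F ar ℕ}, g ∈ w.funcs → MS.base g ∈ (liftT (ar := ar) w).funcs
  | .var x, h => by simp [Tm.funcs] at h
  | .fn f ts, h => by
    simp only [Tm.funcs, liftT, Set.mem_insert_iff, Set.mem_iUnion] at h ⊢
    rcases h with rfl | ⟨i, hi⟩
    · exact Or.inl rfl
    · exact Or.inr ⟨i, funcs_liftT hi⟩

lemma funcs_markT_arg {f : F} {ws : Fin (ar f) → Tm F ar ℕ} {g : F} (j : Fin (ar f))
    (h : g ∈ (ws j).funcs) : MS.base g ∈ (markT (Tm.fn f ws)).funcs := by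
  simp only [markT, Tm.funcs, Set.mem_insert_iff, Set.mem_iUnion]
  exact Or.inr ⟨j, funcs_liftT h⟩

lemma exists_count_pos {x : ℕ} {f : F} {ts : Fin (ar f) → Tm F ar ℕ}
    (h : 0 < Tm.count x (Tm.fn f ts)) : ∃ i, 0 < Tm.count x (ts i) := by
  by_contra hc
  push_neg at hc
  simp only [Tm.count] at h
  have h2 : ∑ i, Tm.count x (ts i) = 0 :=
    Finset.sum_eq_zero (fun i _ => Nat.le_zero.mp (hc i))
  omega

lemma count_pos_fn {x : ℕ} {f : F} {ts : Fin (ar f) → Tm F ar ℕ} {i : Fin (ar f)}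
    (h : 0 < Tm.count x (ts i)) : 0 < Tm.count x (Tm.fn f ts) := by
  simp only [Tm.count]
  exact lt_of_lt_of_le h (Finset.single_le_sum (f := fun j => Tm.count x (ts j))
    (fun j _ => Nat.zero_le _) (Finset.mem_univ i))

lemma funcs_subst {σ : ℕ → Tm F ar ℕ} {g : F} : ∀ {u : Tm F ar ℕ}, g ∈ (u.subst σ).funcs →
    g ∈ u.funcs ∨ ∃ x, 0 < Tm.count x u ∧ g ∈ (σ x).funcs
  | .var x, h => Or.inr ⟨x, by simp [Tm.count], h⟩
  | .fn f ts, h => by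
    simp only [Tm.subst, Tm.funcs, Set.mem_insert_iff, Set.mem_iUnion] at h
    rcases h with rfl | ⟨i, hi⟩
    · exact Or.inl (by simp [Tm.funcs])
    · rcases funcs_subst hi with h' | ⟨x, hx, hgx⟩
      · refine Or.inl ?_
        simp only [Tm.funcs, Set.mem_insert_iff, Set.mem_iUnion]
        exact Or.inr ⟨i, h'⟩
      · exact Or.inr ⟨x, count_pos_fn hx, hgx⟩

lemma funcs_subst_count {σ : ℕ → Tm F ar ℕ} {x : ℕ} : ∀ {u : Tm F ar ℕ},
    0 < Tm.count x u → (σ x).funcs ⊆ (u.subst σ).funcs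
  | .var y, h => by
    have hyx : y = x := by
      by_contra hne
      simp [Tm.count, hne] at h
    subst hyx
    exact subset_rfl
  | .fn f ts, h => by
    obtain ⟨i, hi⟩ := exists_count_pos h
    intro g hg
    have h2 := funcs_subst_count hi hg
    simp only [Tm.subst, Tm.funcs, Set.mem_insert_iff, Set.mem_iUnion]
    exact Or.inr ⟨i, h2⟩

lemma childR_subst {σ : ℕ → Tm F ar ℕ} {x : ℕ} : ∀ {s : Tm F ar ℕ}, 0 < Tm.count x s →
    Relation.ReflTransGen childR (σ x) (s.subst σ)
  | .var y, h => by
    have hyx : y = x := by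
      by_contra hne
      simp [Tm.count, hne] at h
    subst hyx
    exact Relation.ReflTransGen.refl
  | .fn f ts, h => by
    obtain ⟨i, hi⟩ := exists_count_pos h
    exact Relation.ReflTransGen.tail (childR_subst hi)
      ⟨f, (fun j => (ts j).subst σ), i, rfl, rfl⟩

/-! ### `maxSubts` lemmas -/

lemma mem_maxSubts_X {X : Tm F ar ℕ → Prop} : ∀ {t u : Tm F ar ℕ}, u ∈ maxSubts X t → X u
  | .var x, u, h => by
    rw [maxSubts] at h
    split at h
    · rcases List.mem_singleton.mp h with rfl; assumption
    · simp at h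
  | .fn f ts, u, h => by
    rw [maxSubts] at h
    split at h
    · rcases List.mem_singleton.mp h with rfl; assumption
    · rw [List.mem_flatten] at h
      obtain ⟨l, hl, hul⟩ := h
      rw [List.mem_ofFn] at hl
      obtain ⟨i, rfl⟩ := hl
      exact mem_maxSubts_X hul

lemma mem_maxSubts_count {X : Tm F ar ℕ → Prop} {x : ℕ} : ∀ {t u : Tm F ar ℕ},
    u ∈ maxSubts X t → 0 < Tm.count x u → 0 < Tm.count x t
  | .var y, u, h, hc => by
    rw [maxSubts] at h
    split at h
    · rcases List.mem_singleton.mp h with rfl; exact hc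
    · simp at h
  | .fn f ts, u, h, hc => by
    rw [maxSubts] at h
    split at h
    · rcases List.mem_singleton.mp h with rfl; exact hc
    · rw [List.mem_flatten] at h
      obtain ⟨l, hl, hul⟩ := h
      rw [List.mem_ofFn] at hl
      obtain ⟨i, rfl⟩ := hl
      exact count_pos_fn (mem_maxSubts_count hul hc)

lemma mem_maxSubts_sub {X : Tm F ar ℕ → Prop} : ∀ {t u : Tm F ar ℕ},
    u ∈ maxSubts X t → Relation.ReflTransGen childR u t
  | .var y, u, h => by
    rw [maxSubts] at h
    split at h
    · rcases List.mem_singleton.mp h with rfl; exact Relation.ReflTransGen.refl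
    · simp at h
  | .fn f ts, u, h => by
    rw [maxSubts] at h
    split at h
    · rcases List.mem_singleton.mp h with rfl; exact Relation.ReflTransGen.refl
    · rw [List.mem_flatten] at h
      obtain ⟨l, hl, hul⟩ := h
      rw [List.mem_ofFn] at hl
      obtain ⟨i, rfl⟩ := hl
      exact Relation.ReflTransGen.tail (mem_maxSubts_sub hul) ⟨f, ts, i, rfl, rfl⟩

lemma funcs_com {p : Tm F ar ℕ × Tm F ar ℕ} {L : List (Tm (MS F ar) (mar ar) ℕ)}
    {w : Tm (MS F ar) (mar ar) ℕ} (hw : w ∈ L) : w.funcs ⊆ (com p L).funcs := by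
  rw [com]
  split
  · next h =>
    obtain ⟨a, rfl⟩ := List.length_eq_one_iff.mp h
    rcases List.mem_singleton.mp hw with rfl
    exact subset_rfl
  · obtain ⟨i, rfl⟩ := List.mem_iff_get.mp hw
    intro g hg
    exact Set.mem_insert_iff.mpr (Or.inr (Set.mem_iUnion.mpr ⟨i, hg⟩))

lemma forall₂_ofFn {α β : Type} {Pr : α → β → Prop} : ∀ {n : ℕ} {A : Fin n → List α}
    {B : Fin n → List β}, (∀ i, List.Forall₂ Pr (A i) (B i)) →
    List.Forall₂ (List.Forall₂ Pr) (List.ofFn A) (List.ofFn B)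
  | 0, A, B, _ => by simp
  | (n+1), A, B, h => by
    rw [List.ofFn_succ, List.ofFn_succ]
    exact List.Forall₂.cons (h 0) (forall₂_ofFn (fun i => h i.succ))

lemma list_sum_fin (K : List ℕ) : ∑ i : Fin K.length, K.get i = K.sum := by
  conv_rhs => rw [← List.ofFn_get K]
  rw [List.sum_ofFn]

lemma mem_le_sum {K : List ℕ} {x : ℕ} (h : x ∈ K) : x ≤ K.sum :=
  List.single_le_sum (fun _ _ => Nat.zero_le _) x h

end WDPDevel
section WDPDevel2

open Relation List

variable {F : Type} {ar : F → ℕ}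
variable (R : Set (Tm F ar ℕ × Tm F ar ℕ))
variable (P : Set (Tm (MS F ar) (mar ar) ℕ × Tm (MS F ar) (mar ar) ℕ))

/-- Symbols whose rules are usable for `P`. -/
def SafeSym : Set F :=
  {f | ∃ q ∈ P, ∃ g, MS.base g ∈ Tm.funcs q.2 ∧ Relation.ReflTransGen (depR R) g f}

/-- All defined symbols occurring in `w` are safe. -/
def FullSafe (w : Tm F ar ℕ) : Prop :=
  ∀ g ∈ w.funcs, g ∈ DefinedSym R → g ∈ SafeSym R P

lemma safeSym_tail {f g : F} (hf : f ∈ SafeSym R P) (h : depR R f g) : g ∈ SafeSym R P := by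
  obtain ⟨q, hq, g0, hg0, hchain⟩ := hf
  exact ⟨q, hq, g0, hg0, hchain.tail h⟩

lemma usable_mem {l r : Tm F ar ℕ} (hp : (l, r) ∈ R) {f : F} {ts : Fin (ar f) → Tm F ar ℕ}
    (h1 : l = Tm.fn f ts) (hf : f ∈ SafeSym R P) : (liftT l, liftT r) ∈ combined R P := by
  obtain ⟨q, hq, g0, hg0, hchain⟩ := hf
  exact Set.mem_union_left _ ⟨(l, r), ⟨q, hq, hp, g0, f, hg0, hchain, ts, h1⟩, rfl⟩

lemma fullSafe_rew (hTRS : IsTRS R) : ∀ {w w' : Tm F ar ℕ}, Rew R w w' →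
    FullSafe R P w → FullSafe R P w' := by
  intro w w' h
  induction h with
  | @rule l r σ hp =>
    intro hw g hg hgD
    obtain ⟨f0, ls, hl⟩ : ∃ f0 ls, l = Tm.fn f0 ls := by
      cases l with
      | var x => exact absurd rfl ((hTRS _ hp).1 x)
      | fn f0 ls => exact ⟨f0, ls, rfl⟩
    rcases funcs_subst hg with hgr | ⟨x, hx, hgx⟩
    · have hfD : f0 ∈ DefinedSym R := ⟨(l, r), hp, ls, hl⟩
      have hroot : f0 ∈ SafeSym R P := by
        apply hw f0 _ hfD
        rw [hl]
        exact Set.mem_insert _ _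
      exact safeSym_tail R P hroot ⟨(l, r), hp, ⟨ls, hl⟩, hgD, hgr⟩
    · have hxl := (hTRS _ hp).2 x hx
      exact hw g (funcs_subst_count hxl hgx) hgD
  | @congr f ts i t' hs ih =>
    intro hw g hg hgD
    have hts : FullSafe R P (ts i) := by
      intro g' hg' hg'D
      apply hw g' _ hg'D
      simp only [Tm.funcs, Set.mem_insert_iff, Set.mem_iUnion]
      exact Or.inr ⟨i, hg'⟩
    have ht' := ih hts
    simp only [Tm.funcs, Set.mem_insert_iff, Set.mem_iUnion] at hg
    rcases hg with rfl | ⟨j, hj⟩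
    · exact hw g (Set.mem_insert _ _) hgD
    · by_cases hji : j = i
      · subst hji
        rw [Function.update_self] at hj
        exact ht' g hj hgD
      · rw [Function.update_of_ne hji] at hj
        apply hw g _ hgD
        simp only [Tm.funcs, Set.mem_insert_iff, Set.mem_iUnion]
        exact Or.inr ⟨j, hj⟩

lemma rew_lift (hTRS : IsTRS R) : ∀ {w w' : Tm F ar ℕ}, Rew R w w' →
    FullSafe R P w → Rew (combined R P) (liftT w) (liftT w') := by
  intro w w' h
  induction h with
  | @rule l r σ hp =>
    intro hw
    obtain ⟨f0, ls, hl⟩ : ∃ f0 ls, l = Tm.fn f0 ls := by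
      cases l with
      | var x => exact absurd rfl ((hTRS _ hp).1 x)
      | fn f0 ls => exact ⟨f0, ls, rfl⟩
    have hfD : f0 ∈ DefinedSym R := ⟨(l, r), hp, ls, hl⟩
    have hroot : f0 ∈ SafeSym R P := by
      apply hw f0 _ hfD
      rw [hl]
      exact Set.mem_insert _ _
    have hrule := usable_mem R P hp hl hroot
    have h2 := Rew.rule (R := combined R P) (fun x => liftT (σ x)) hrule
    rw [liftT_subst, liftT_subst]
    exact h2
  | @congr f ts i t' hs ih =>
    intro hw
    have hts : FullSafe R P (ts i) := by
      intro g' hg' hg'D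
      apply hw g' _ hg'D
      simp only [Tm.funcs, Set.mem_insert_iff, Set.mem_iUnion]
      exact Or.inr ⟨i, hg'⟩
    have h2 := Rew.congr (R := combined R P) (f := MS.base f)
      (ts := fun j => liftT (ts j)) i (ih hts)
    show Rew _ (Tm.fn (MS.base f) fun j => liftT (ts j))
      (Tm.fn (MS.base f) fun j => liftT (Function.update ts i t' j))
    have he : (Tm.fn (MS.base f) fun j => liftT (Function.update ts i t' j)) =
        Tm.fn (MS.base f) (Function.update (fun j => liftT (ts j)) i (liftT t')) :=
      congrArg _ (compUpdate liftT ts i t')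
    rw [he]
    exact h2

section StepRel

variable {R P}
variable {X : Tm F ar ℕ → Prop} {step : Tm F ar ℕ → Tm F ar ℕ → Prop}

/-- Simulation of a derivation inside a fully safe term by lifted usable rules. -/
lemma liftSim (hTRS : IsTRS R) (hsub : ∀ {s u}, step s u → Rew R s u) :
    ∀ (m : ℕ) (w : Tm F ar ℕ) (d : ℕ → Tm F ar ℕ), FullSafe R P w → d 0 = w →
      ChainOf step m d → Bnd (Rew (combined R P)) m (liftT w) := by
  intro m
  induction m with
  | zero => exact fun w d _ _ _ => bndZero _ _
  | succ m ih =>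
    intro w d hw h0 hc
    have hstep := hc 0 (Nat.succ_pos m)
    rw [h0] at hstep
    have hR : Rew R w (d 1) := hsub hstep
    have hrest := ih (d 1) (fun n => d (n + 1)) (fullSafe_rew R P hTRS hR hw) rfl (chainShift hc)
    exact bndCons (rew_lift R P hTRS hR hw) hrest

variable (hTRS : IsTRS R)
  (hcases : ∀ {s u : Tm F ar ℕ}, step s u →
    (∃ l, ∃ r, ∃ σ : ℕ → Tm F ar ℕ, (l, r) ∈ R ∧ s = l.subst σ ∧ u = r.subst σ ∧
      ∀ x, 0 < Tm.count x l → (X (Tm.var x) ∨ ∀ w, ¬ step (σ x) w)) ∨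
    (∃ f, ∃ ts : Fin (ar f) → Tm F ar ℕ, ∃ i, ∃ t', s = Tm.fn f ts ∧
      u = Tm.fn f (Function.update ts i t') ∧ step (ts i) t'))

include hTRS hcases in
lemma splitOne : ∀ (k : ℕ) {f : F}, f ∉ DefinedSym R →
    ∀ (as : Fin (ar f) → Tm F ar ℕ) (d : ℕ → Tm F ar ℕ), d 0 = Tm.fn f as → ChainOf step k d →
    ∃ kf : Fin (ar f) → ℕ, (∑ i, kf i) = k ∧
      ∀ i, ∃ di, di 0 = as i ∧ ChainOf step (kf i) di := by
  intro k
  induction k with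
  | zero =>
    intro f hf as d h0 hc
    exact ⟨fun _ => 0, by simp, fun i => ⟨fun _ => as i, rfl,
      fun j hj => (Nat.not_lt_zero j hj).elim⟩⟩
  | succ k ih =>
    intro f hf as d h0 hc
    have hstep := hc 0 (Nat.succ_pos k)
    rw [h0] at hstep
    rcases hcases hstep with ⟨l, r, σ, hp, hs, -, -⟩ | ⟨f', ts', i, t', hs, hu, hst⟩
    · exfalso
      obtain ⟨f0, ls, hl⟩ : ∃ f0 ls, l = Tm.fn f0 ls := by
        cases l with
        | var x => exact absurd rfl ((hTRS _ hp).1 x)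
        | fn f0 ls => exact ⟨f0, ls, rfl⟩
      subst hl
      have hs' : Tm.fn f as = Tm.fn f0 (fun i => (ls i).subst σ) := hs
      injection hs' with hff _
      exact hf (hff ▸ ⟨(Tm.fn f0 ls, r), hp, ls, rfl⟩)
    · injection hs with hff hts
      subst hff
      have hts' := eq_of_heq hts
      subst hts'
      obtain ⟨kf, hsum, hder⟩ := ih hf (Function.update as i t') (fun n => d (n + 1)) hu
        (chainShift hc)
      refine ⟨Function.update kf i (kf i + 1), ?_, ?_⟩
      · rw [Finset.sum_update_of_mem (Finset.mem_univ i)]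
        have h' := Finset.sum_update_of_mem (Finset.mem_univ i) kf (kf i)
        rw [Function.update_eq_self] at h'
        omega
      · intro j
        by_cases hji : j = i
        · subst hji
          obtain ⟨di, di0, dic⟩ := hder j
          rw [Function.update_self] at di0 ⊢
          refine ⟨(fun n => match n with | 0 => as j | (n+1) => di n), rfl, ?_⟩
          intro n hn
          match n with
          | 0 => show step (as j) (di 0); rw [di0]; exact hst
          | (n+1) => exact dic n (by omega)
        · rw [Function.update_of_ne hji]
          obtain ⟨di, di0, dic⟩ := hder j
          rw [Function.update_of_ne hji] at di0
          exact ⟨di, di0, dic⟩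

include hTRS hcases in
lemma splitStar (hXD : ∀ (f : F) (ts : Fin (ar f) → Tm F ar ℕ), f ∈ DefinedSym R →
      X (Tm.fn f ts)) :
    ∀ (t : Tm F ar ℕ) (σ : ℕ → Tm F ar ℕ) (k : ℕ) (d : ℕ → Tm F ar ℕ),
    (∀ x, 0 < Tm.count x t → (X (Tm.var x) ∨ ∀ w, ¬ step (σ x) w)) →
    d 0 = t.subst σ → ChainOf step k d →
    ∃ K : List ℕ, K.sum = k ∧
      List.Forall₂ (fun u kk => ∃ du, du 0 = u.subst σ ∧ ChainOf step kk du)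
        (maxSubts X t) K := by
  intro t
  induction t with
  | var x =>
    intro σ k d hv h0 hc
    rw [maxSubts]
    split
    · exact ⟨[k], by simp, List.Forall₂.cons ⟨d, h0, hc⟩ List.Forall₂.nil⟩
    · next hX =>
      have hk : k = 0 := by
        by_contra hk0
        have hstep := hc 0 (Nat.pos_of_ne_zero hk0)
        rcases hv x (by simp [Tm.count]) with hX' | hns
        · exact hX hX'
        · rw [h0] at hstep
          exact hns _ hstep
      exact ⟨[], by simp [hk], List.Forall₂.nil⟩
  | fn f ts ih =>
    intro σ k d hv h0 hc
    rw [maxSubts]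
    split
    · exact ⟨[k], by simp, List.Forall₂.cons ⟨d, h0, hc⟩ List.Forall₂.nil⟩
    · next hX =>
      have hf : f ∉ DefinedSym R := fun hD => hX (hXD f ts hD)
      obtain ⟨kf, hsum, hder⟩ := splitOne hTRS hcases k hf (fun i => (ts i).subst σ) d h0
        hc
      have hrec : ∀ i, ∃ K : List ℕ, K.sum = kf i ∧
          List.Forall₂ (fun u kk => ∃ du, du 0 = u.subst σ ∧ ChainOf step kk du)
            (maxSubts X (ts i)) K := by
        intro i
        obtain ⟨di, di0, dic⟩ := hder i
        exact ih i σ (kf i) di (fun x hx => hv x (count_pos_fn hx)) di0 dic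
      choose Ks hKsum hKf using hrec
      refine ⟨(List.ofFn Ks).flatten, ?_, ?_⟩
      · simp only [List.sum_flatten, List.map_ofFn, Function.comp_def, List.sum_ofFn]
        simp_rw [hKsum]
        exact hsum
      · exact List.rel_flatten (forall₂_ofFn (fun i => hKf i))

end StepRel

end WDPDevel2
section WDPMaster

open Relation List

variable {F : Type} {ar : F → ℕ}
variable {R : Set (Tm F ar ℕ × Tm F ar ℕ)}
variable {P : Set (Tm (MS F ar) (mar ar) ℕ × Tm (MS F ar) (mar ar) ℕ)}
variable {X : Tm F ar ℕ → Prop} {step : Tm F ar ℕ → Tm F ar ℕ → Prop}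

theorem markSim (hTRS : IsTRS R)
    (hsub : ∀ {s u : Tm F ar ℕ}, step s u → Rew R s u)
    (hcases : ∀ {s u : Tm F ar ℕ}, step s u →
      (∃ l, ∃ r, ∃ σ : ℕ → Tm F ar ℕ, (l, r) ∈ R ∧ s = l.subst σ ∧ u = r.subst σ ∧
        ∀ x, 0 < Tm.count x l → (X (Tm.var x) ∨ ∀ w, ¬ step (σ x) w)) ∨
      (∃ f, ∃ ts : Fin (ar f) → Tm F ar ℕ, ∃ i, ∃ t', s = Tm.fn f ts ∧
        u = Tm.fn f (Function.update ts i t') ∧ step (ts i) t'))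
    (hXD : ∀ (f : F) (ts : Fin (ar f) → Tm F ar ℕ), f ∈ DefinedSym R → X (Tm.fn f ts))
    (hXvf : ∀ u, X u → (∃ x, u = Tm.var x) ∨
      ∃ f, ∃ ts : Fin (ar f) → Tm F ar ℕ, u = Tm.fn f ts ∧ f ∈ DefinedSym R)
    (hPX : ∀ p ∈ R, (markT p.1, com p ((maxSubts X p.2).map markT)) ∈ P) :
    ∀ (m : ℕ) (f : F) (ts : Fin (ar f) → Tm F ar ℕ) (d : ℕ → Tm F ar ℕ),
      f ∈ DefinedSym R → (∀ i, FullSafe R P (ts i)) → d 0 = Tm.fn f ts →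
      ChainOf step m d → Bnd (Rew (combined R P)) m (markT (Tm.fn f ts)) := by
  intro m
  induction m using Nat.strong_induction_on with
  | _ m IH =>
  rcases m with _ | m
  · intro f ts d _ _ _ _
    exact bndZero _ _
  intro f ts d hfD hsafe h0 hc
  have hstep := hc 0 (Nat.succ_pos m)
  rw [h0] at hstep
  rcases hcases hstep with ⟨l, r, σ, hp, hs, hu, hvars⟩ | ⟨f', ts', i, t', hs, hu, hst⟩
  · -- root step
    obtain ⟨f0, ls, hl⟩ : ∃ f0, ∃ ls : Fin (ar f0) → Tm F ar ℕ, l = Tm.fn f0 ls := by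
      cases l with
      | var x => exact absurd rfl ((hTRS _ hp).1 x)
      | fn f0 ls => exact ⟨f0, ls, rfl⟩
    subst hl
    have hs' : Tm.fn f ts = Tm.fn f0 (fun i => (ls i).subst σ) := hs
    injection hs' with hff hts
    subst hff
    have hts' : ts = fun i => (ls i).subst σ := eq_of_heq hts
    have hq := hPX (Tm.fn f ls, r) hp
    have hmark : markT (Tm.fn f ts) =
        (markT (Tm.fn f ls)).subst (fun x => liftT (σ x)) := by
      rw [hts']
      exact markT_subst σ f ls
    have hstep1 : Rew (combined R P) (markT (Tm.fn f ts))
        ((com (Tm.fn f ls, r) ((maxSubts X r).map markT)).subst (fun x => liftT (σ x))) := by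
      rw [hmark]
      exact Rew.rule _ (Set.mem_union_right _ hq)
    have hvars' : ∀ x, 0 < Tm.count x r → (X (Tm.var x) ∨ ∀ w, ¬ step (σ x) w) :=
      fun x hx => hvars x ((hTRS _ hp).2 x hx)
    obtain ⟨K, hKsum, hKf⟩ := splitStar hTRS hcases hXD r σ m (fun n => d (n + 1)) hvars'
      hu (chainShift hc)
    have hsafe' : ∀ i, FullSafe R P ((ls i).subst σ) := by
      intro i
      have h := hsafe i
      rw [hts'] at h
      exact h
    have hσsafe : ∀ x, 0 < Tm.count x r → FullSafe R P (σ x) := by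
      intro x hx g hg hgD
      obtain ⟨j, hj⟩ := exists_count_pos ((hTRS _ hp).2 x hx)
      exact hsafe' j g (funcs_subst_count hj hg) hgD
    have hpiece : ∀ u, u ∈ maxSubts X r → ∀ kk, kk ≤ m →
        (∃ du : ℕ → Tm F ar ℕ, du 0 = u.subst σ ∧ ChainOf step kk du) →
        Bnd (Rew (combined R P)) kk ((markT u).subst (fun x => liftT (σ x))) := by
      rintro u hu' kk hkk ⟨du, du0, duc⟩
      rcases hXvf u (mem_maxSubts_X hu') with ⟨x, rfl⟩ | ⟨g, ws, rfl, hgD⟩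
      · have hxr : 0 < Tm.count x r := mem_maxSubts_count hu' (by simp [Tm.count])
        exact liftSim hTRS hsub kk (σ x) du (hσsafe x hxr) du0 duc
      · have hbelow : ∀ j, FullSafe R P ((ws j).subst σ) := by
          intro j g' hg' hg'D
          rcases funcs_subst hg' with hgw | ⟨x, hx, hgx⟩
          · exact ⟨(markT (Tm.fn f ls), com (Tm.fn f ls, r) ((maxSubts X r).map markT)),
              hq, g', funcs_com (List.mem_map_of_mem (f := markT) hu') (funcs_markT_arg j hgw),
              Relation.ReflTransGen.refl⟩
          · have hxr : 0 < Tm.count x r := mem_maxSubts_count hu' (count_pos_fn hx)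
            exact hσsafe x hxr g' hgx hg'D
        have hres := IH kk (by omega) g (fun j => (ws j).subst σ) du hgD hbelow du0 duc
        have hres' : Bnd (Rew (combined R P)) kk (markT ((Tm.fn g ws).subst σ)) := hres
        rw [markT_subst] at hres'
        exact hres'
    refine bndCons hstep1 ?_
    by_cases hlen : ((maxSubts X r).map markT).length = 1
    · obtain ⟨u, hus⟩ : ∃ u, maxSubts X r = [u] := by
        apply List.length_eq_one_iff.mp
        simpa using hlen
      have hcom : com (Tm.fn f ls, r) ((maxSubts X r).map markT) = markT u := by
        rw [hus]
        show com (Tm.fn f ls, r) [markT u] = markT u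
        simp [com]
      rw [hcom]
      have hKlen : K.length = 1 := by
        rw [← hKf.length_eq, hus]
        rfl
      obtain ⟨kk, rfl⟩ := List.length_eq_one_iff.mp hKlen
      rw [hus] at hKf
      rcases List.forall₂_cons.mp hKf with ⟨hp1, -⟩
      simp only [List.sum_cons, List.sum_nil, Nat.add_zero] at hKsum
      subst hKsum
      exact hpiece u (hus ▸ List.mem_singleton_self u) _ le_rfl hp1
    · have hcom : com (Tm.fn f ls, r) ((maxSubts X r).map markT) =
          Tm.fn (MS.comp (Tm.fn f ls, r) ((maxSubts X r).map markT).length)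
            (fun i => ((maxSubts X r).map markT).get i) := by
        rw [com, dif_neg hlen]
      rw [hcom]
      show Bnd _ m (Tm.fn (MS.comp (Tm.fn f ls, r) ((maxSubts X r).map markT).length)
        (fun i => (((maxSubts X r).map markT).get i).subst (fun x => liftT (σ x))))
      have hcast : mar ar (MS.comp (Tm.fn f ls, r) ((maxSubts X r).map markT).length) =
          K.length := by
        show ((maxSubts X r).map markT).length = K.length
        rw [List.length_map]
        exact hKf.length_eq
      have hget := (List.forall₂_iff_get.mp hKf).2
      have hbnd : ∀ i : Fin (mar ar (MS.comp (Tm.fn f ls, r) ((maxSubts X r).map markT).length)),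
          Bnd (Rew (combined R P)) (K.get (Fin.cast hcast i))
            ((((maxSubts X r).map markT).get i).subst (fun x => liftT (σ x))) := by
        intro i
        have hi0 : (i : ℕ) < ((maxSubts X r).map markT).length := i.isLt
        have hi1 : (i : ℕ) < (maxSubts X r).length := by
          have hlm : ((maxSubts X r).map markT).length = (maxSubts X r).length :=
            List.length_map _
          omega
        have hi2 : (i : ℕ) < K.length := by
          have := hKf.length_eq
          omega
        have hrel := hget i hi1 hi2
        have hmem : (maxSubts X r).get ⟨i, hi1⟩ ∈ maxSubts X r := List.get_mem _ _
        have hkk : K.get ⟨(i : ℕ), hi2⟩ ≤ m := hKsum ▸ mem_le_sum (List.get_mem K _)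
        have hgm : ((maxSubts X r).map markT).get i = markT ((maxSubts X r).get ⟨i, hi1⟩) := by
          show ((maxSubts X r).map markT)[(i : ℕ)]'hi0 = _
          simp [List.get_eq_getElem, List.getElem_map]
        have hkk2 : K.get (Fin.cast hcast i) = K.get ⟨(i : ℕ), hi2⟩ := rfl
        rw [hgm, hkk2]
        exact hpiece _ hmem _ hkk hrel
      have hfin := bndFn (f := MS.comp (Tm.fn f ls, r) ((maxSubts X r).map markT).length)
        (fun i => (((maxSubts X r).map markT).get i).subst (fun x => liftT (σ x)))
        (fun i => K.get (Fin.cast hcast i)) hbnd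
      have hsum2 : (∑ i, K.get (Fin.cast hcast i)) = m := by
        have h1 : (∑ i : Fin (mar ar (MS.comp (Tm.fn f ls, r)
              ((maxSubts X r).map markT).length)), K.get (Fin.cast hcast i)) =
            ∑ j : Fin K.length, K.get j :=
          Fintype.sum_equiv (finCongr hcast) _ _ (fun i => rfl)
        rw [h1, list_sum_fin]
        exact hKsum
      rwa [hsum2] at hfin
  · -- argument step
    injection hs with hff hts
    subst hff
    have hts2 : ts = ts' := eq_of_heq hts
    subst hts2
    have hsi := hsafe i
    have hR : Rew R (ts i) t' := hsub hst
    have hnew : ∀ j, FullSafe R P (Function.update ts i t' j) := by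
      intro j
      by_cases hji : j = i
      · subst hji
        rw [Function.update_self]
        exact fullSafe_rew R P hTRS hR hsi
      · rw [Function.update_of_ne hji]
        exact hsafe j
    have hrest := IH m (by omega) f (Function.update ts i t') (fun n => d (n + 1)) hfD hnew
      hu (chainShift hc)
    have hm : Rew (combined R P) (markT (Tm.fn f ts))
        (markT (Tm.fn f (Function.update ts i t'))) := by
      have h2 := Rew.congr (R := combined R P) (f := MS.mark f)
        (ts := fun j => liftT (ts j)) i (rew_lift R P hTRS hR hsi)
      show Rew _ (Tm.fn (MS.mark f) fun j => liftT (ts j))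
        (Tm.fn (MS.mark f) fun j => liftT (Function.update ts i t' j))
      have he : (Tm.fn (MS.mark f) fun j => liftT (Function.update ts i t' j)) =
          Tm.fn (MS.mark f) (Function.update (fun j => liftT (ts j)) i (liftT t')) :=
        congrArg _ (compUpdate liftT ts i t')
      rw [he]
      exact h2
    exact bndCons hm hrest

end WDPMaster
section WDPMasterDP

open Relation List

variable {F : Type} {ar : F → ℕ}
variable {R : Set (Tm F ar ℕ × Tm F ar ℕ)}
variable {P : Set (Tm (MS F ar) (mar ar) ℕ × Tm (MS F ar) (mar ar) ℕ)}
variable {X : Tm F ar ℕ → Prop} {step : Tm F ar ℕ → Tm F ar ℕ → Prop}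

theorem markSimDP (hTRS : IsTRS R)
    (hsub : ∀ {s u : Tm F ar ℕ}, step s u → Rew R s u)
    (hcases : ∀ {s u : Tm F ar ℕ}, step s u →
      (∃ l, ∃ r, ∃ σ : ℕ → Tm F ar ℕ, (l, r) ∈ R ∧ s = l.subst σ ∧ u = r.subst σ ∧
        ∀ x, 0 < Tm.count x l → (X (Tm.var x) ∨ ∀ w, ¬ step (σ x) w)) ∨
      (∃ f, ∃ ts : Fin (ar f) → Tm F ar ℕ, ∃ i, ∃ t', s = Tm.fn f ts ∧
        u = Tm.fn f (Function.update ts i t') ∧ step (ts i) t'))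
    (hXD : ∀ (f : F) (ts : Fin (ar f) → Tm F ar ℕ), f ∈ DefinedSym R → X (Tm.fn f ts))
    (hXf : ∀ u, X u →
      ∃ f, ∃ ts : Fin (ar f) → Tm F ar ℕ, u = Tm.fn f ts ∧ f ∈ DefinedSym R)
    (hnull : ∀ p ∈ R, (maxSubts X p.2).length ≤ 1)
    (hDP : ∀ p ∈ R, ∀ u ∈ maxSubts X p.2, (markT p.1, markT u) ∈ P) :
    ∀ (m : ℕ) (f : F) (ts : Fin (ar f) → Tm F ar ℕ) (d : ℕ → Tm F ar ℕ),
      f ∈ DefinedSym R → (∀ i, FullSafe R P (ts i)) → d 0 = Tm.fn f ts →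
      ChainOf step m d → Bnd (Rew (combined R P)) (m - 1) (markT (Tm.fn f ts)) := by
  intro m
  induction m using Nat.strong_induction_on with
  | _ m IH =>
  rcases m with _ | m
  · intro f ts d _ _ _ _
    exact bndZero _ _
  intro f ts d hfD hsafe h0 hc
  have hstep := hc 0 (Nat.succ_pos m)
  rw [h0] at hstep
  rcases hcases hstep with ⟨l, r, σ, hp, hs, hu, hvars⟩ | ⟨f', ts', i, t', hs, hu, hst⟩
  · -- root step
    obtain ⟨f0, ls, hl⟩ : ∃ f0, ∃ ls : Fin (ar f0) → Tm F ar ℕ, l = Tm.fn f0 ls := by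
      cases l with
      | var x => exact absurd rfl ((hTRS _ hp).1 x)
      | fn f0 ls => exact ⟨f0, ls, rfl⟩
    subst hl
    have hs' : Tm.fn f ts = Tm.fn f0 (fun i => (ls i).subst σ) := hs
    injection hs' with hff hts
    subst hff
    have hts' : ts = fun i => (ls i).subst σ := eq_of_heq hts
    have hvars' : ∀ x, 0 < Tm.count x r → (X (Tm.var x) ∨ ∀ w, ¬ step (σ x) w) :=
      fun x hx => hvars x ((hTRS _ hp).2 x hx)
    obtain ⟨K, hKsum, hKf⟩ := splitStar hTRS hcases hXD r σ m (fun n => d (n + 1)) hvars'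
      hu (chainShift hc)
    have hsafe' : ∀ i, FullSafe R P ((ls i).subst σ) := by
      intro i
      have h := hsafe i
      rw [hts'] at h
      exact h
    have hσsafe : ∀ x, 0 < Tm.count x r → FullSafe R P (σ x) := by
      intro x hx g hg hgD
      obtain ⟨j, hj⟩ := exists_count_pos ((hTRS _ hp).2 x hx)
      exact hsafe' j g (funcs_subst_count hj hg) hgD
    have hlen := hnull (Tm.fn f ls, r) hp
    obtain hus | ⟨u, hus⟩ : maxSubts X r = [] ∨ ∃ u, maxSubts X r = [u] := by
      rcases h : maxSubts X r with _ | ⟨u, _ | ⟨v, w⟩⟩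
      · exact Or.inl rfl
      · exact Or.inr ⟨u, rfl⟩
      · rw [h] at hlen
        simp at hlen
    · -- no pieces: derivation must stop here
      rw [hus] at hKf
      cases hKf
      simp only [List.sum_nil] at hKsum
      subst hKsum
      simpa using bndZero (Rew (combined R P)) (markT (Tm.fn f ts))
    · -- exactly one piece
      have humem : u ∈ maxSubts X r := hus ▸ List.mem_singleton_self u
      obtain ⟨g, ws, rfl, hgD⟩ := hXf u (mem_maxSubts_X humem)
      have hdp := hDP (Tm.fn f ls, r) hp _ humem
      have hmark : markT (Tm.fn f ts) =
          (markT (Tm.fn f ls)).subst (fun x => liftT (σ x)) := by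
        rw [hts']
        exact markT_subst σ f ls
      have hstep1 : Rew (combined R P) (markT (Tm.fn f ts))
          ((markT (Tm.fn g ws)).subst (fun x => liftT (σ x))) := by
        rw [hmark]
        exact Rew.rule _ (Set.mem_union_right _ hdp)
      have hKlen : K.length = 1 := by
        rw [← hKf.length_eq, hus]
        rfl
      obtain ⟨kk, rfl⟩ := List.length_eq_one_iff.mp hKlen
      rw [hus] at hKf
      rcases List.forall₂_cons.mp hKf with ⟨⟨du, du0, duc⟩, -⟩
      simp only [List.sum_cons, List.sum_nil, Nat.add_zero] at hKsum
      subst hKsum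
      have hbelow : ∀ j, FullSafe R P ((ws j).subst σ) := by
        intro j g' hg' hg'D
        rcases funcs_subst hg' with hgw | ⟨x, hx, hgx⟩
        · exact ⟨(markT (Tm.fn f ls), markT (Tm.fn g ws)), hdp, g',
            funcs_markT_arg j hgw, Relation.ReflTransGen.refl⟩
        · have hxr : 0 < Tm.count x r := mem_maxSubts_count humem (count_pos_fn hx)
          exact hσsafe x hxr g' hgx hg'D
      have hres := IH kk (by omega) g (fun j => (ws j).subst σ) du hgD hbelow du0 duc
      have hres' : Bnd (Rew (combined R P)) (kk - 1) (markT ((Tm.fn g ws).subst σ)) := hres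
      rw [markT_subst] at hres'
      have hfin := bndCons hstep1 hres'
      exact bndMono hfin (by omega)
  · -- argument step
    injection hs with hff hts
    subst hff
    have hts2 : ts = ts' := eq_of_heq hts
    subst hts2
    have hsi := hsafe i
    have hR : Rew R (ts i) t' := hsub hst
    have hnew : ∀ j, FullSafe R P (Function.update ts i t' j) := by
      intro j
      by_cases hji : j = i
      · subst hji
        rw [Function.update_self]
        exact fullSafe_rew R P hTRS hR hsi
      · rw [Function.update_of_ne hji]
        exact hsafe j
    have hrest := IH m (by omega) f (Function.update ts i t') (fun n => d (n + 1)) hfD hnew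
      hu (chainShift hc)
    have hm : Rew (combined R P) (markT (Tm.fn f ts))
        (markT (Tm.fn f (Function.update ts i t'))) := by
      have h2 := Rew.congr (R := combined R P) (f := MS.mark f)
        (ts := fun j => liftT (ts j)) i (rew_lift R P hTRS hR hsi)
      show Rew _ (Tm.fn (MS.mark f) fun j => liftT (ts j))
        (Tm.fn (MS.mark f) fun j => liftT (Function.update ts i t' j))
      have he : (Tm.fn (MS.mark f) fun j => liftT (Function.update ts i t' j)) =
          Tm.fn (MS.mark f) (Function.update (fun j => liftT (ts j)) i (liftT t')) :=
        congrArg _ (compUpdate liftT ts i t')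
      rw [he]
      exact h2
    exact bndMono (bndCons hm hrest) (by omega)

end WDPMasterDP

section WDPInstances

open Relation

variable {F : Type} {ar : F → ℕ} {R : Set (Tm F ar ℕ × Tm F ar ℕ)}

lemma irew_rew : ∀ {s u : Tm F ar ℕ}, IRew R s u → Rew R s u := by
  intro s u h
  induction h with
  | rule σ hp _ => exact Rew.rule σ hp
  | congr i _ ih => exact Rew.congr i ih

lemma hcasesRew : ∀ {s u : Tm F ar ℕ}, Rew R s u →
    (∃ l, ∃ r, ∃ σ : ℕ → Tm F ar ℕ, (l, r) ∈ R ∧ s = l.subst σ ∧ u = r.subst σ ∧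
      ∀ x, 0 < Tm.count x l → (RootDV R (Tm.var x) ∨ ∀ w, ¬ Rew R (σ x) w)) ∨
    (∃ f, ∃ ts : Fin (ar f) → Tm F ar ℕ, ∃ i, ∃ t', s = Tm.fn f ts ∧
      u = Tm.fn f (Function.update ts i t') ∧ Rew R (ts i) t') := by
  intro s u h
  cases h with
  | @rule l r σ hp =>
    exact Or.inl ⟨l, r, σ, hp, rfl, rfl, fun x _ => Or.inl (Or.inl ⟨x, rfl⟩)⟩
  | @congr f ts i t' hs =>
    exact Or.inr ⟨f, ts, i, t', rfl, rfl, hs⟩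

lemma hcasesIRew (hTRS : IsTRS R) {X : Tm F ar ℕ → Prop} :
    ∀ {s u : Tm F ar ℕ}, IRew R s u →
    (∃ l, ∃ r, ∃ σ : ℕ → Tm F ar ℕ, (l, r) ∈ R ∧ s = l.subst σ ∧ u = r.subst σ ∧
      ∀ x, 0 < Tm.count x l → (X (Tm.var x) ∨ ∀ w, ¬ IRew R (σ x) w)) ∨
    (∃ f, ∃ ts : Fin (ar f) → Tm F ar ℕ, ∃ i, ∃ t', s = Tm.fn f ts ∧
      u = Tm.fn f (Function.update ts i t') ∧ IRew R (ts i) t') := by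
  intro s u h
  cases h with
  | @rule l r σ hp hnf =>
    refine Or.inl ⟨l, r, σ, hp, rfl, rfl, ?_⟩
    intro x hx
    right
    intro w hw
    obtain ⟨f0, ls, hl⟩ : ∃ f0, ∃ ls : Fin (ar f0) → Tm F ar ℕ, l = Tm.fn f0 ls := by
      cases l with
      | var x => exact absurd rfl ((hTRS _ hp).1 x)
      | fn f0 ls => exact ⟨f0, ls, rfl⟩
    subst hl
    obtain ⟨j, hj⟩ := exists_count_pos hx
    have hchild : Relation.TransGen childR (σ x) ((Tm.fn f0 ls).subst σ) :=
      Relation.TransGen.tail' (childR_subst hj) ⟨f0, (fun k => (ls k).subst σ), j, rfl, rfl⟩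
    exact hnf _ hchild ⟨w, irew_rew hw⟩
  | @congr f ts i t' hs =>
    exact Or.inr ⟨f, ts, i, t', rfl, rfl, hs⟩

end WDPInstances
/-- Let `R` be a finite TRS and `t` a basic term.  Then:
(i) if `t` is `→_R`-terminating, every `→_R`-derivation of length `m` from `t` yields a
`→_{U(WDP(R)) ∪ WDP(R)}`-derivation of length `m` from `t♯`;
(ii) if `t` is `i→_R`-terminating, every `i→_R`-derivation of length `m` from `t`
yields a `→_{U(WIDP(R)) ∪ WIDP(R)}`-derivation of length `m` from `t♯`;
(iii) if moreover all compound symbols occurring in `WIDP(R)` are nullary, every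
`i→_R`-derivation of length `m` from `t` yields a `→_{U(DP(R)) ∪ DP(R)}`-derivation of
length at least `m − 1` from `t♯`. -/
theorem weak_dependency_pairs (R : Set (Tm F ar ℕ × Tm F ar ℕ)) (hfin : R.Finite)
    (hTRS : IsTRS R) (t : Tm F ar ℕ) (hbasic : BasicTm R t) :
    ((¬ ∃ d : ℕ → Tm F ar ℕ, d 0 = t ∧ ∀ i, Rew R (d i) (d (i + 1))) →
      ∀ (m : ℕ) (d : ℕ → Tm F ar ℕ), d 0 = t → ChainOf (Rew R) m d →
        ∃ d' : ℕ → Tm (MS F ar) (mar ar) ℕ, d' 0 = markT t ∧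
          ChainOf (Rew (combined R (WDPs R))) m d') ∧
    ((¬ ∃ d : ℕ → Tm F ar ℕ, d 0 = t ∧ ∀ i, IRew R (d i) (d (i + 1))) →
      ∀ (m : ℕ) (d : ℕ → Tm F ar ℕ), d 0 = t → ChainOf (IRew R) m d →
        ∃ d' : ℕ → Tm (MS F ar) (mar ar) ℕ, d' 0 = markT t ∧
          ChainOf (Rew (combined R (WIDPs R))) m d') ∧
    ((∀ q ∈ WIDPs R, ∀ p n, MS.comp p n ∈ Tm.funcs q.2 → n = 0) →
      (¬ ∃ d : ℕ → Tm F ar ℕ, d 0 = t ∧ ∀ i, IRew R (d i) (d (i + 1))) →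
      ∀ (m : ℕ) (d : ℕ → Tm F ar ℕ), d 0 = t → ChainOf (IRew R) m d →
        ∃ m', m - 1 ≤ m' ∧ ∃ d' : ℕ → Tm (MS F ar) (mar ar) ℕ, d' 0 = markT t ∧
          ChainOf (Rew (combined R (DPs R))) m' d') := by
  obtain ⟨f, ts, rfl, hfD, hcons⟩ := hbasic
  have hsafe0 : ∀ (P : Set (Tm (MS F ar) (mar ar) ℕ × Tm (MS F ar) (mar ar) ℕ)) i,
      FullSafe R P (ts i) := fun P i g hg hgD => absurd hgD (hcons i g hg)
  refine ⟨?_, ?_, ?_⟩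
  · intro _ m d hd0 hchain
    exact markSim (R := R) (P := WDPs R) (X := RootDV R) (step := Rew R) hTRS
      (fun h => h) hcasesRew
      (fun f' ts' hf => Or.inr ⟨f', ts', rfl, hf⟩)
      (fun u h => h)
      (fun p hp => ⟨p, hp, rfl⟩)
      m f ts d hfD (hsafe0 _) hd0 hchain
  · intro _ m d hd0 hchain
    exact markSim (R := R) (P := WIDPs R) (X := RootD R) (step := IRew R) hTRS
      irew_rew (hcasesIRew hTRS)
      (fun f' ts' hf => ⟨f', ts', rfl, hf⟩)
      (fun u h => Or.inr h)
      (fun p hp => ⟨p, hp, rfl⟩)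
      m f ts d hfD (hsafe0 _) hd0 hchain
  · intro hnullary _ m d hd0 hchain
    have hnull : ∀ p ∈ R, (maxSubts (RootD R) p.2).length ≤ 1 := by
      intro p hp
      by_contra hgt
      push_neg at hgt
      have hne : ((maxSubts (RootD R) p.2).map markT).length ≠ 1 := by
        rw [List.length_map]
        omega
      have hq : (markT p.1, com p ((maxSubts (RootD R) p.2).map markT)) ∈ WIDPs R :=
        ⟨p, hp, rfl⟩
      have hcomp : MS.comp p ((maxSubts (RootD R) p.2).map markT).length ∈
          Tm.funcs (com p ((maxSubts (RootD R) p.2).map markT)) := by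
        rw [com, dif_neg hne]
        exact Set.mem_insert _ _
      have hz := hnullary _ hq p _ hcomp
      rw [List.length_map] at hz
      omega
    have hDP : ∀ p ∈ R, ∀ u ∈ maxSubts (RootD R) p.2, (markT p.1, markT u) ∈ DPs R := by
      intro p hp u hu
      exact ⟨p, hp, u, mem_maxSubts_sub hu, mem_maxSubts_X hu, rfl⟩
    refine ⟨m - 1, le_rfl, ?_⟩
    exact markSimDP (R := R) (P := DPs R) (X := RootD R) (step := IRew R) hTRS
      irew_rew (hcasesIRew hTRS)
      (fun f' ts' hf => ⟨f', ts', rfl, hf⟩)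
      (fun u h => h) hnull hDP m f ts d hfD (hsafe0 _) hd0 hchain
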